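/- Let F be a linearly ordered field in which every nonnegative element is a square. Let P₁, P₂ ∈ F² and let ℓ = (a, b, c) be a line with (a, b) ≠ (0, 0), and suppose P₂ is closer to ℓ than to P₁, i.e., (a·(P₂)₁ + b·(P₂)₂ + c)² ≤ ((P₁ − P₂) ⬝ (P₁ − P₂))·(a² + b²). Then there exists a line m = (a', b', c') with a'² + b'² ≠ 0 such that P₂ lies on m and the reflection of P₁ across m lies on ℓ. (Axiom (H*5): the fold placing P₁ onto ℓ and passing through P₂ exists.) -/

import Mathlib

/-- The reflection of a point `P` across the line `a·x + b·y + c = 0`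
(meaningful when the line is non-isotropic, i.e. `a² + b² ≠ 0`):
`refl P = P − (2(a·P₁ + b·P₂ + c)/(a² + b²))·(a, b)`. -/
def reflLine {F : Type*} [Field F] (a b c : F) (P : F × F) : F × F :=
  (P.1 - 2 * (a * P.1 + b * P.2 + c) / (a ^ 2 + b ^ 2) * a,
   P.2 - 2 * (a * P.1 + b * P.2 + c) / (a ^ 2 + b ^ 2) * b)

theorem reflLine_fix {F : Type*} [Field F] (a b c : F) (P : F × F)
    (h : a * P.1 + b * P.2 + c = 0) : reflLine a b c P = P := by
  simp [reflLine, h]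

theorem sq_add_sq_eq_zero {F : Type*} [Field F] [LinearOrder F] [IsStrictOrderedRing F] {x y : F}
    (h : x ^ 2 + y ^ 2 = 0) : x = 0 ∧ y = 0 := by
  constructor
  · have : x ^ 2 = 0 := by nlinarith [sq_nonneg x, sq_nonneg y]
    exact pow_eq_zero_iff (by norm_num) |>.mp this
  · have : y ^ 2 = 0 := by nlinarith [sq_nonneg x, sq_nonneg y]
    exact pow_eq_zero_iff (by norm_num) |>.mp this

/-- Axiom (H*5) holds in the plane over a linearly ordered field in
which every nonnegative element is a square: if `P₂` is closer to the line `ℓ`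
than to `P₁`, there is a fold through `P₂` placing `P₁` onto `ℓ`. -/
theorem stmt_12 {F : Type*} [Field F] [LinearOrder F] [IsStrictOrderedRing F]
    (hsq : ∀ x : F, 0 ≤ x → ∃ y : F, x = y ^ 2)
    (P₁ P₂ : F × F) (a b c : F) (hl : (a, b) ≠ ((0 : F), (0 : F)))
    (hcloser : (a * P₂.1 + b * P₂.2 + c) ^ 2 ≤
      ((P₁.1 - P₂.1) * (P₁.1 - P₂.1) + (P₁.2 - P₂.2) * (P₁.2 - P₂.2)) * (a ^ 2 + b ^ 2)) :
    ∃ a' b' c' : F, a' ^ 2 + b' ^ 2 ≠ 0 ∧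
      a' * P₂.1 + b' * P₂.2 + c' = 0 ∧
      a * (reflLine a' b' c' P₁).1 + b * (reflLine a' b' c' P₁).2 + c = 0 := by
  have hs : a ^ 2 + b ^ 2 ≠ 0 := by
    intro h
    obtain ⟨ha, hb⟩ := sq_add_sq_eq_zero h
    exact hl (by simp [ha, hb])
  set s : F := a ^ 2 + b ^ 2 with hs_def
  set e : F := a * P₂.1 + b * P₂.2 + c with he_def
  set r2 : F := (P₁.1 - P₂.1) * (P₁.1 - P₂.1) + (P₁.2 - P₂.2) * (P₁.2 - P₂.2) with hr2_def
  obtain ⟨y, hy⟩ := hsq (r2 * s - e ^ 2) (by linarith)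
  set Q1 : F := P₂.1 - e / s * a - y / s * b with hQ1_def
  set Q2 : F := P₂.2 - e / s * b + y / s * a with hQ2_def
  have hQl : a * Q1 + b * Q2 + c = 0 := by
    rw [hQ1_def, hQ2_def, he_def]
    field_simp
    linear_combination (a * P₂.1 + b * P₂.2 + c) * hs_def
  have hQdist : (Q1 - P₂.1) ^ 2 + (Q2 - P₂.2) ^ 2 = r2 := by
    have key : (Q1 - P₂.1) ^ 2 + (Q2 - P₂.2) ^ 2 = (e ^ 2 + y ^ 2) * s / s ^ 2 := by
      rw [hQ1_def, hQ2_def]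
      field_simp
      linear_combination -(e ^ 2 + y ^ 2) * hs_def
    rw [key, ← hy]
    field_simp
    ring
  by_cases hQP : Q1 = P₁.1 ∧ Q2 = P₁.2
  · -- P₁ lies on ℓ; fold along a line through P₁ and P₂
    rw [hQP.1, hQP.2] at hQl
    by_cases hP : P₁ = P₂
    · refine ⟨1, 0, -P₂.1, by norm_num, by ring, ?_⟩
      rw [reflLine_fix 1 0 (-P₂.1) P₁ (by rw [hP]; ring)]
      exact hQl
    · refine ⟨P₂.2 - P₁.2, P₁.1 - P₂.1, P₂.1 * P₁.2 - P₁.1 * P₂.2, ?_, by ring, ?_⟩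
      · intro h
        obtain ⟨h1, h2⟩ := sq_add_sq_eq_zero h
        exact hP (Prod.ext (by linarith) (by linarith))
      · rw [reflLine_fix _ _ _ P₁ (by ring)]
        exact hQl
  · -- fold along the perpendicular bisector of P₁ and Q
    have hne : (P₁.1 - Q1) ^ 2 + (P₁.2 - Q2) ^ 2 ≠ 0 := by
      intro h
      obtain ⟨h1, h2⟩ := sq_add_sq_eq_zero h
      exact hQP ⟨by linarith, by linarith⟩
    refine ⟨P₁.1 - Q1, P₁.2 - Q2,
      -((P₁.1 ^ 2 - Q1 ^ 2 + (P₁.2 ^ 2 - Q2 ^ 2)) / 2), hne, ?_, ?_⟩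
    · -- P₂ is equidistant from P₁ and Q
      have h2 : (Q1 - P₂.1) ^ 2 + (Q2 - P₂.2) ^ 2
          = (P₁.1 - P₂.1) ^ 2 + (P₁.2 - P₂.2) ^ 2 := by
        rw [hQdist, hr2_def]; ring
      linear_combination (1 / 2 : F) * h2
    · -- the reflection of P₁ is Q, which lies on ℓ
      have hrefl : reflLine (P₁.1 - Q1) (P₁.2 - Q2)
          (-((P₁.1 ^ 2 - Q1 ^ 2 + (P₁.2 ^ 2 - Q2 ^ 2)) / 2)) P₁ = (Q1, Q2) := by
        have hnum : (P₁.1 - Q1) * P₁.1 + (P₁.2 - Q2) * P₁.2 +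
            -((P₁.1 ^ 2 - Q1 ^ 2 + (P₁.2 ^ 2 - Q2 ^ 2)) / 2)
            = ((P₁.1 - Q1) ^ 2 + (P₁.2 - Q2) ^ 2) / 2 := by ring
        unfold reflLine
        rw [hnum]
        refine Prod.ext ?_ ?_ <;> simp only <;> field_simp <;> ring
      rw [hrefl]
      exact hQl
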